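/- Every complex root α of u(x) = x^{m+1}(x^{m+1}+x)^k − 1 satisfies |α| ≥ r₊, where r₊ is the unique positive real root of u. -/

import Mathlib

theorem abs_root_ge (m k : ℕ) (hm : 1 ≤ m) (hk : 1 ≤ k) (r : ℝ) (hr : 0 < r)
    (hroot : r ^ (m + 1) * (r ^ (m + 1) + r) ^ k - 1 = 0)
    (α : ℂ) (hα : α ^ (m + 1) * (α ^ (m + 1) + α) ^ k - 1 = 0) :
    r ≤ ‖α‖ := by
  by_contra h
  push_neg at h
  set a := ‖α‖ with ha
  have ha0 : 0 ≤ a := norm_nonneg α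
  have heq : α ^ (m + 1) * (α ^ (m + 1) + α) ^ k = 1 := by linear_combination hα
  have habs : ‖α ^ (m + 1) * (α ^ (m + 1) + α) ^ k‖ = 1 := by
    rw [heq]; simp
  have h1 : ‖α ^ (m + 1) * (α ^ (m + 1) + α) ^ k‖
      ≤ a ^ (m + 1) * (a ^ (m + 1) + a) ^ k := by
    rw [norm_mul, norm_pow, norm_pow]
    gcongr
    calc ‖α ^ (m + 1) + α‖ ≤ ‖α ^ (m + 1)‖ + ‖α‖ :=
          norm_add_le _ _
        _ = a ^ (m + 1) + a := by rw [norm_pow]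
  have h2 : a ^ (m + 1) * (a ^ (m + 1) + a) ^ k < r ^ (m + 1) * (r ^ (m + 1) + r) ^ k := by
    have hp : a ^ (m + 1) < r ^ (m + 1) := by gcongr
    have hs : a ^ (m + 1) + a < r ^ (m + 1) + r := add_lt_add hp h
    have hk0 : k ≠ 0 := by omega
    exact mul_lt_mul' hp.le (pow_lt_pow_left₀ hs (by positivity) hk0)
      (by positivity) (by positivity)
  have hr1 : r ^ (m + 1) * (r ^ (m + 1) + r) ^ k = 1 := by linarith
  linarith [h1, h2, habs.symm.le]
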